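/- Let f = A_s + ⋯ be a formal vector field on ℂⁿ in Poincaré–Dulac normal form. Then: (a) the divergence div f = tr Df is a formal first integral of the linear vector field A_s, i.e. X_{A_s}(div f) = 0; (b) if ψ is a formal inverse Jacobi multiplier of f (i.e. X_f(ψ) = div f · ψ), then X_{A_s}(ψ) = (div A_s)·ψ. -/

import Mathlib

open Finset

/-- Coefficient-wise partial derivative of a multivariate formal power series. -/
noncomputable def psD {n : ℕ} (i : Fin n) (φ : MvPowerSeries (Fin n) ℂ) :
    MvPowerSeries (Fin n) ℂ :=
  fun m => ((m i : ℂ) + 1) * MvPowerSeries.coeff (R := ℂ) (m + Finsupp.single i 1) φ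

/-- Formal vector fields on ℂⁿ. -/
abbrev FVF (n : ℕ) := Fin n → MvPowerSeries (Fin n) ℂ

/-- Lie derivative `X_g(φ)`. -/
noncomputable def lieD {n : ℕ} (g : FVF n) (φ : MvPowerSeries (Fin n) ℂ) :
    MvPowerSeries (Fin n) ℂ :=
  ∑ j, g j * psD j φ

/-- Lie bracket `[g,h] = Dh·g − Dg·h`. -/
noncomputable def fbr {n : ℕ} (g h : FVF n) : FVF n :=
  fun i => lieD g (h i) - lieD h (g i)

/-- The linear vector field `x ↦ Ax`. -/
noncomputable def linVF {n : ℕ} (A : Matrix (Fin n) (Fin n) ℂ) : FVF n :=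
  fun i => ∑ j, MvPowerSeries.C (σ := Fin n) (R := ℂ) (A i j) * MvPowerSeries.X j

/-- `f` vanishes at `0` and has linear part `A`. -/
def hasLin {n : ℕ} (f : FVF n) (A : Matrix (Fin n) (Fin n) ℂ) : Prop :=
  (∀ i, MvPowerSeries.coeff (R := ℂ) 0 (f i) = 0) ∧
  ∀ i j, MvPowerSeries.coeff (R := ℂ) (Finsupp.single j 1) (f i) = A i j

/-- Multiplication of a vector field by a scalar formal power series. -/
noncomputable def psSMul {n : ℕ} (φ : MvPowerSeries (Fin n) ℂ) (f : FVF n) : FVF n :=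
  fun i => φ * f i

/-- A formal power series is constant. -/
def constPS {n : ℕ} (φ : MvPowerSeries (Fin n) ℂ) : Prop :=
  ∀ m : Fin n →₀ ℕ, m ≠ 0 → MvPowerSeries.coeff (R := ℂ) m φ = 0

/-- A matrix is diagonalizable (semisimple). -/
def IsDiagonalizable {n : ℕ} (M : Matrix (Fin n) (Fin n) ℂ) : Prop :=
  ∃ P : Matrix (Fin n) (Fin n) ℂ, IsUnit P ∧ (P⁻¹ * M * P).IsDiag

/-- Dimension of the space of matrices commuting with `A`. -/
noncomputable def matCentDim {n : ℕ} (A : Matrix (Fin n) (Fin n) ℂ) : ℕ :=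
  Module.finrank ℂ (Subalgebra.centralizer ℂ ({A} : Set (Matrix (Fin n) (Fin n) ℂ)))

/-- Linear part (as a matrix) of a formal vector field. -/
noncomputable def linPart {n : ℕ} (h : FVF n) : Matrix (Fin n) (Fin n) ℂ :=
  Matrix.of fun i j => MvPowerSeries.coeff (R := ℂ) (Finsupp.single j 1) (h i)

/-- Divergence of a formal vector field. -/
noncomputable def divPS {n : ℕ} (f : FVF n) : MvPowerSeries (Fin n) ℂ :=
  ∑ i, psD i (f i)

namespace S18
open MvPowerSeries
variable {n : ℕ}

lemma coeff_psD (i : Fin n) (φ : MvPowerSeries (Fin n) ℂ) (m : Fin n →₀ ℕ) :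
    coeff (R := ℂ) m (psD i φ) = ((m i : ℂ) + 1) * coeff (R := ℂ) (m + Finsupp.single i 1) φ := rfl

lemma sub_add_single {m : Fin n →₀ ℕ} {k : Fin n} (h : m k ≠ 0) :
    m - Finsupp.single k 1 + Finsupp.single k 1 = m := by
  ext a
  by_cases hak : k = a
  · subst hak; simp [Finsupp.single_apply]; omega
  · simp [Finsupp.single_apply, hak]

lemma key_reindex (i : Fin n) (m : Fin n →₀ ℕ) (F : (Fin n →₀ ℕ) → (Fin n →₀ ℕ) → ℂ) :
    Finset.sum (antidiagonal (m + Finsupp.single i 1))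
        (fun x : (Fin n →₀ ℕ) × (Fin n →₀ ℕ) => ((x.1 i : ℕ) : ℂ) * F x.1 x.2)
      = Finset.sum (antidiagonal m)
        (fun y : (Fin n →₀ ℕ) × (Fin n →₀ ℕ) =>
          (((y.1 i : ℕ) : ℂ) + 1) * F (y.1 + Finsupp.single i 1) y.2) := by
  classical
  rw [← Finset.sum_filter_of_ne (p := fun x => x.1 i ≠ 0)
    (fun x _ hx => by intro h0; apply hx; rw [h0]; simp)]
  refine Finset.sum_nbij' (fun x => (x.1 - Finsupp.single i 1, x.2))
    (fun y => (y.1 + Finsupp.single i 1, y.2)) ?_ ?_ ?_ ?_ ?_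
  · rintro ⟨p, q⟩ hx
    simp only [Finset.mem_filter, HasAntidiagonal.mem_antidiagonal] at hx ⊢
    obtain ⟨hpq, hpi⟩ := hx
    ext a
    have := DFunLike.congr_fun hpq a
    by_cases hak : i = a
    · subst hak; simp [Finsupp.single_apply] at this ⊢; omega
    · simp [Finsupp.single_apply, hak] at this ⊢; omega
  · rintro ⟨p, q⟩ hy
    simp only [HasAntidiagonal.mem_antidiagonal] at hy
    simp only [Finset.mem_filter, HasAntidiagonal.mem_antidiagonal]
    constructor
    · ext a
      have := DFunLike.congr_fun hy a
      by_cases hak : i = a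
      · subst hak; simp [Finsupp.single_apply] at this ⊢; omega
      · simp [Finsupp.single_apply, hak] at this ⊢; omega
    · simp
  · rintro ⟨p, q⟩ hx
    simp only [Finset.mem_filter, HasAntidiagonal.mem_antidiagonal] at hx
    simp [sub_add_single hx.2]
  · rintro ⟨p, q⟩ hy
    simp
  · rintro ⟨p, q⟩ hx
    simp only [Finset.mem_filter, HasAntidiagonal.mem_antidiagonal] at hx
    simp only [sub_add_single hx.2]
    have h2 := Finsupp.tsub_apply p (Finsupp.single i 1) i
    rw [h2, Finsupp.single_apply, if_pos rfl]
    have h3 : ((p i - 1 : ℕ) : ℂ) + 1 = ((p i : ℕ) : ℂ) := by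
      rw [Nat.cast_sub (by omega : 1 ≤ p i)]; ring
    rw [h3]

lemma psD_mul (i : Fin n) (φ ρ : MvPowerSeries (Fin n) ℂ) :
    psD i (φ * ρ) = psD i φ * ρ + φ * psD i ρ := by
  classical
  ext m
  rw [map_add, coeff_psD, coeff_mul, coeff_mul, coeff_mul, Finset.mul_sum]
  have hsplit : ∀ x ∈ antidiagonal (m + Finsupp.single i 1),
      ((m i : ℂ) + 1) * (coeff (R := ℂ) x.1 φ * coeff (R := ℂ) x.2 ρ)
        = ((x.1 i : ℕ) : ℂ) * (coeff (R := ℂ) x.1 φ * coeff (R := ℂ) x.2 ρ)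
          + ((x.2 i : ℕ) : ℂ) * (coeff (R := ℂ) x.1 φ * coeff (R := ℂ) x.2 ρ) := by
    rintro ⟨p, q⟩ hx
    simp only [HasAntidiagonal.mem_antidiagonal] at hx
    have h0 := DFunLike.congr_fun hx i
    simp only [Finsupp.add_apply, Finsupp.single_apply, if_pos rfl] at h0
    have h1 : ((p i : ℕ) : ℂ) + ((q i : ℕ) : ℂ) = (m i : ℂ) + 1 := by exact_mod_cast h0
    rw [← h1]; ring
  rw [Finset.sum_congr rfl hsplit, Finset.sum_add_distrib]
  congr 1
  · refine Eq.trans (key_reindex i m fun p q => coeff (R := ℂ) p φ * coeff (R := ℂ) q ρ)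
      (Finset.sum_congr rfl ?_)
    rintro ⟨p, q⟩ _
    rw [coeff_psD]; ring
  · have swap1 : Finset.sum (antidiagonal (m + Finsupp.single i 1))
        (fun x : (Fin n →₀ ℕ) × (Fin n →₀ ℕ) =>
          ((x.2 i : ℕ) : ℂ) * (coeff (R := ℂ) x.1 φ * coeff (R := ℂ) x.2 ρ))
        = Finset.sum (antidiagonal (m + Finsupp.single i 1))
        (fun x : (Fin n →₀ ℕ) × (Fin n →₀ ℕ) =>
          ((x.1 i : ℕ) : ℂ) * (coeff (R := ℂ) x.1 ρ * coeff (R := ℂ) x.2 φ)) := by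
      refine Finset.sum_nbij' (fun x => (x.2, x.1)) (fun x => (x.2, x.1)) ?_ ?_ ?_ ?_ ?_
      · rintro ⟨p, q⟩ hx
        simp only [HasAntidiagonal.mem_antidiagonal] at hx ⊢
        rw [add_comm]; exact hx
      · rintro ⟨p, q⟩ hx
        simp only [HasAntidiagonal.mem_antidiagonal] at hx ⊢
        rw [add_comm]; exact hx
      · rintro ⟨p, q⟩ _; rfl
      · rintro ⟨p, q⟩ _; rfl
      · rintro ⟨p, q⟩ _; simp only; ring
    have swap2 : Finset.sum (antidiagonal m)
        (fun y : (Fin n →₀ ℕ) × (Fin n →₀ ℕ) =>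
          (((y.1 i : ℕ) : ℂ) + 1) * ((coeff (R := ℂ) (y.1 + Finsupp.single i 1)) ρ * (coeff (R := ℂ) y.2) φ))
        = Finset.sum (antidiagonal m)
        (fun y : (Fin n →₀ ℕ) × (Fin n →₀ ℕ) =>
          coeff (R := ℂ) y.1 φ * coeff (R := ℂ) y.2 (psD i ρ)) := by
      refine Finset.sum_nbij' (fun x => (x.2, x.1)) (fun x => (x.2, x.1)) ?_ ?_ ?_ ?_ ?_
      · rintro ⟨p, q⟩ hx
        simp only [HasAntidiagonal.mem_antidiagonal] at hx ⊢
        rw [add_comm]; exact hx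
      · rintro ⟨p, q⟩ hx
        simp only [HasAntidiagonal.mem_antidiagonal] at hx ⊢
        rw [add_comm]; exact hx
      · rintro ⟨p, q⟩ _; rfl
      · rintro ⟨p, q⟩ _; rfl
      · rintro ⟨p, q⟩ _
        simp only [coeff_psD]; ring
    exact Eq.trans swap1 (Eq.trans
      (key_reindex i m fun p q => coeff (R := ℂ) p ρ * coeff (R := ℂ) q φ) swap2)

lemma psD_add (i : Fin n) (φ ρ : MvPowerSeries (Fin n) ℂ) :
    psD i (φ + ρ) = psD i φ + psD i ρ := by
  ext m; simp only [coeff_psD, map_add]; ring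

lemma psD_sub (i : Fin n) (φ ρ : MvPowerSeries (Fin n) ℂ) :
    psD i (φ - ρ) = psD i φ - psD i ρ := by
  ext m; simp only [coeff_psD, map_sub]; ring

lemma psD_sum {α : Type*} (i : Fin n) (s : Finset α) (F : α → MvPowerSeries (Fin n) ℂ) :
    psD i (∑ a ∈ s, F a) = ∑ a ∈ s, psD i (F a) := by
  ext m; simp only [coeff_psD, map_sum, Finset.mul_sum]

lemma psD_C_mul (i : Fin n) (a : ℂ) (φ : MvPowerSeries (Fin n) ℂ) :
    psD i (C (σ := Fin n) (R := ℂ) a * φ) = C (σ := Fin n) (R := ℂ) a * psD i φ := by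
  ext m; simp only [coeff_psD, coeff_C_mul]; ring

lemma psD_comm (i j : Fin n) (φ : MvPowerSeries (Fin n) ℂ) :
    psD i (psD j φ) = psD j (psD i φ) := by
  rcases eq_or_ne i j with h | h
  · subst h; rfl
  · ext m
    simp only [coeff_psD, Finsupp.add_apply, Finsupp.single_apply, if_neg h, if_neg h.symm,
      add_zero]
    rw [add_right_comm m (Finsupp.single i 1) (Finsupp.single j 1)]
    ring

lemma coeff_X_mul (k : Fin n) (φ : MvPowerSeries (Fin n) ℂ) (m : Fin n →₀ ℕ) :
    coeff (R := ℂ) m (X k * φ) =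
      if m k = 0 then 0 else coeff (R := ℂ) (m - Finsupp.single k 1) φ := by
  rw [X_def, coeff_monomial_mul]
  by_cases h : m k = 0 <;> simp [Finsupp.single_le_iff, Nat.one_le_iff_ne_zero, h]

lemma add_single_sub_single {i k : Fin n} (h : i ≠ k) (m : Fin n →₀ ℕ) :
    m + Finsupp.single i 1 - Finsupp.single k 1
      = m - Finsupp.single k 1 + Finsupp.single i 1 := by
  ext a
  rw [Finsupp.tsub_apply, Finsupp.add_apply, Finsupp.add_apply, Finsupp.tsub_apply]
  by_cases hia : i = a
  · subst hia
    simp [Finsupp.single_apply, Ne.symm h]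
  · by_cases hka : k = a <;> simp [Finsupp.single_apply, hia, hka]

lemma psD_X_mul (i k : Fin n) (φ : MvPowerSeries (Fin n) ℂ) :
    psD i (X k * φ) = (if i = k then φ else 0) + X k * psD i φ := by
  ext m
  rw [map_add, coeff_psD, coeff_X_mul, coeff_X_mul]
  rcases eq_or_ne i k with h | h
  · subst h
    have hc : ((m + Finsupp.single i 1 : Fin n →₀ ℕ)) i = m i + 1 := by
      simp [Finsupp.single_apply]
    simp only [if_pos rfl, hc, add_tsub_cancel_right]
    by_cases h2 : m i = 0
    · simp [h2]
    · rw [if_neg (by omega : ¬ (m i + 1 = 0)), if_neg h2, coeff_psD, sub_add_single h2]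
      have h4 := Finsupp.tsub_apply m (Finsupp.single i 1) i
      rw [h4, Finsupp.single_apply, if_pos rfl, Nat.cast_sub (show 1 ≤ m i by omega)]
      push_cast
      ring
  · have hc : ((m + Finsupp.single i 1 : Fin n →₀ ℕ)) k = m k := by
      simp [Finsupp.single_apply, h]
    simp only [if_neg h, map_zero, zero_add, hc]
    by_cases h2 : m k = 0
    · simp [h2]
    · rw [if_neg h2, if_neg h2, coeff_psD, add_single_sub_single h]
      have h5 : ((m - Finsupp.single k 1 : Fin n →₀ ℕ)) i = m i := by
        rw [Finsupp.tsub_apply, Finsupp.single_apply, if_neg (Ne.symm h)]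
        simp
      rw [h5]

lemma lieD_def (g : FVF n) (φ : MvPowerSeries (Fin n) ℂ) :
    lieD g φ = ∑ j, g j * psD j φ := rfl

lemma lieD_add (g : FVF n) (φ ρ : MvPowerSeries (Fin n) ℂ) :
    lieD g (φ + ρ) = lieD g φ + lieD g ρ := by
  simp only [lieD_def, psD_add, mul_add, Finset.sum_add_distrib]

lemma lieD_sub (g : FVF n) (φ ρ : MvPowerSeries (Fin n) ℂ) :
    lieD g (φ - ρ) = lieD g φ - lieD g ρ := by
  simp only [lieD_def, psD_sub, mul_sub, Finset.sum_sub_distrib]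

lemma lieD_sum {α : Type*} (g : FVF n) (s : Finset α) (F : α → MvPowerSeries (Fin n) ℂ) :
    lieD g (∑ a ∈ s, F a) = ∑ a ∈ s, lieD g (F a) := by
  simp only [lieD_def, psD_sum, Finset.mul_sum]
  rw [Finset.sum_comm]

lemma lieD_C_mul (g : FVF n) (a : ℂ) (φ : MvPowerSeries (Fin n) ℂ) :
    lieD g (C (σ := Fin n) (R := ℂ) a * φ) = C (σ := Fin n) (R := ℂ) a * lieD g φ := by
  simp only [lieD_def, psD_C_mul, Finset.mul_sum]
  exact Finset.sum_congr rfl fun j _ => by ring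

lemma lieD_zero (g : FVF n) : lieD g 0 = 0 := by
  have := lieD_sub g 0 0
  simpa using this

lemma lieD_mul (g : FVF n) (φ ρ : MvPowerSeries (Fin n) ℂ) :
    lieD g (φ * ρ) = lieD g φ * ρ + φ * lieD g ρ := by
  simp only [lieD_def, psD_mul, mul_add, Finset.sum_add_distrib, Finset.sum_mul,
    Finset.mul_sum]
  congr 1
  · exact Finset.sum_congr rfl fun j _ => by ring
  · exact Finset.sum_congr rfl fun j _ => by ring

lemma lieD_vadd (g h : FVF n) (φ : MvPowerSeries (Fin n) ℂ) :
    lieD (fun i => g i + h i) φ = lieD g φ + lieD h φ := by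
  simp only [lieD_def, add_mul, Finset.sum_add_distrib]

lemma lieD_lieD (g h : FVF n) (φ : MvPowerSeries (Fin n) ℂ) :
    lieD g (lieD h φ) - lieD h (lieD g φ) = lieD (fbr g h) φ := by
  have expand : ∀ g' h' : FVF n, lieD g' (lieD h' φ)
      = (∑ k, lieD g' (h' k) * psD k φ)
        + ∑ k, ∑ j, (g' j * h' k) * psD j (psD k φ) := by
    intro g' h'
    rw [lieD_def h' φ, lieD_sum]
    rw [show (∑ k, lieD g' (h' k * psD k φ))
        = ∑ k, (lieD g' (h' k) * psD k φ + h' k * lieD g' (psD k φ)) from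
      Finset.sum_congr rfl fun k _ => lieD_mul g' (h' k) (psD k φ)]
    rw [Finset.sum_add_distrib]
    congr 1
    refine Finset.sum_congr rfl fun k _ => ?_
    rw [lieD_def, Finset.mul_sum]
    exact Finset.sum_congr rfl fun j _ => by ring
  rw [expand g h, expand h g]
  have hsym : (∑ k, ∑ j, (g j * h k) * psD j (psD k φ))
      = ∑ k, ∑ j, (h j * g k) * psD j (psD k φ) := by
    rw [Finset.sum_comm]
    refine Finset.sum_congr rfl fun k _ => Finset.sum_congr rfl fun j _ => ?_
    rw [psD_comm]
    ring
  rw [hsym]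
  have : lieD (fbr g h) φ = ∑ k, (lieD g (h k) - lieD h (g k)) * psD k φ := by
    rw [lieD_def]
    exact Finset.sum_congr rfl fun k _ => by rw [show fbr g h k = lieD g (h k) - lieD h (g k) from rfl]
  rw [this]
  rw [show (∑ k, (lieD g (h k) - lieD h (g k)) * psD k φ)
      = ∑ k, (lieD g (h k) * psD k φ - lieD h (g k) * psD k φ) from
    Finset.sum_congr rfl fun k _ => by ring]
  rw [Finset.sum_sub_distrib]
  ring

lemma psD_X (k j : Fin n) :
    psD k (X j : MvPowerSeries (Fin n) ℂ) = if j = k then 1 else 0 := by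
  classical
  ext m
  rw [coeff_psD]
  rcases eq_or_ne j k with h | h
  · subst h
    rw [if_pos rfl, coeff_X, coeff_one]
    rcases eq_or_ne m 0 with hm | hm
    · subst hm; simp
    · rw [if_neg hm, if_neg (fun hc : (m + Finsupp.single j 1 : Fin n →₀ ℕ)
          = Finsupp.single j 1 => hm (add_right_cancel (a := m)
            (b := Finsupp.single j 1) (c := 0) (by rw [zero_add]; exact hc)))]
      ring
  · rw [if_neg h, coeff_X, map_zero]
    rw [if_neg (fun hc : (m + Finsupp.single k 1 : Fin n →₀ ℕ) = Finsupp.single j 1 => by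
      have := DFunLike.congr_fun hc k
      rw [Finsupp.add_apply, Finsupp.single_apply, Finsupp.single_apply,
        if_pos rfl, if_neg h] at this
      omega)]
    ring

lemma linVF_def (B : Matrix (Fin n) (Fin n) ℂ) (i : Fin n) :
    linVF B i = ∑ j, C (σ := Fin n) (R := ℂ) (B i j) * X j := rfl

lemma lieD_X (g : FVF n) (j : Fin n) : lieD g (X j) = g j := by
  rw [lieD_def]
  rw [show (∑ k, g k * psD k (X j)) = ∑ k, if j = k then g k else 0 from
    Finset.sum_congr rfl fun k _ => by rw [psD_X]; split <;> simp]
  simp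

lemma lieD_linVF_comp (g : FVF n) (B : Matrix (Fin n) (Fin n) ℂ) (i : Fin n) :
    lieD g (linVF B i) = ∑ j, C (σ := Fin n) (R := ℂ) (B i j) * g j := by
  rw [linVF_def, lieD_sum]
  exact Finset.sum_congr rfl fun j _ => by rw [lieD_C_mul, lieD_X]

lemma lieD_linVF_expand (B : Matrix (Fin n) (Fin n) ℂ) (φ : MvPowerSeries (Fin n) ℂ) :
    lieD (linVF B) φ = ∑ j, ∑ k, C (σ := Fin n) (R := ℂ) (B j k) * (X k * psD j φ) := by
  rw [lieD_def]
  refine Finset.sum_congr rfl fun j _ => ?_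
  rw [linVF_def, Finset.sum_mul]
  exact Finset.sum_congr rfl fun k _ => mul_assoc _ _ _

lemma psD_lieD_linVF (B : Matrix (Fin n) (Fin n) ℂ) (i : Fin n)
    (φ : MvPowerSeries (Fin n) ℂ) :
    psD i (lieD (linVF B) φ)
      = lieD (linVF B) (psD i φ) + ∑ j, C (σ := Fin n) (R := ℂ) (B j i) * psD j φ := by
  classical
  rw [lieD_linVF_expand, psD_sum]
  rw [show (∑ j, psD i (∑ k, C (σ := Fin n) (R := ℂ) (B j k) * (X k * psD j φ)))
      = ∑ j, ∑ k, (C (σ := Fin n) (R := ℂ) (B j k) * (X k * psD j (psD i φ))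
          + if i = k then C (σ := Fin n) (R := ℂ) (B j k) * psD j φ else 0) from
    Finset.sum_congr rfl fun j _ => by
      rw [psD_sum]
      refine Finset.sum_congr rfl fun k _ => ?_
      rw [psD_C_mul, psD_X_mul, psD_comm]
      split_ifs with h <;> ring]
  rw [show (∑ j, ∑ k, (C (σ := Fin n) (R := ℂ) (B j k) * (X k * psD j (psD i φ))
          + if i = k then C (σ := Fin n) (R := ℂ) (B j k) * psD j φ else 0))
      = (∑ j, ∑ k, C (σ := Fin n) (R := ℂ) (B j k) * (X k * psD j (psD i φ)))
        + ∑ j, ∑ k, if i = k then C (σ := Fin n) (R := ℂ) (B j k) * psD j φ else 0 from by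
    rw [← Finset.sum_add_distrib]
    exact Finset.sum_congr rfl fun j _ => by rw [← Finset.sum_add_distrib]]
  rw [← lieD_linVF_expand]
  congr 1
  refine Finset.sum_congr rfl fun j _ => ?_
  rw [Finset.sum_ite_eq _ i (fun k => C (σ := Fin n) (R := ℂ) (B j k) * psD j φ)]
  simp

lemma part_a (B : Matrix (Fin n) (Fin n) ℂ) (f : FVF n)
    (hPDNF : fbr (linVF B) f = 0) : lieD (linVF B) (divPS f) = 0 := by
  have hcomp : ∀ i, lieD (linVF B) (f i) = lieD f (linVF B i) := by
    intro i
    have h2 : lieD (linVF B) (f i) - lieD f (linVF B i) = 0 := congrFun hPDNF i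
    exact sub_eq_zero.mp h2
  have hstep : ∀ i, lieD (linVF B) (psD i (f i))
      = (∑ j, C (σ := Fin n) (R := ℂ) (B i j) * psD i (f j))
        - ∑ j, C (σ := Fin n) (R := ℂ) (B j i) * psD j (f i) := by
    intro i
    have h1 := psD_lieD_linVF B i (f i)
    have h2 : psD i (lieD (linVF B) (f i)) = ∑ j, C (σ := Fin n) (R := ℂ) (B i j) * psD i (f j) := by
      rw [hcomp i, lieD_linVF_comp, psD_sum]
      exact Finset.sum_congr rfl fun j _ => psD_C_mul i (B i j) (f j)
    rw [h2] at h1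
    exact eq_sub_of_add_eq h1.symm
  rw [show divPS f = ∑ i, psD i (f i) from rfl, lieD_sum]
  rw [Finset.sum_congr rfl (fun i _ => hstep i), Finset.sum_sub_distrib]
  rw [Finset.sum_comm]
  exact sub_self _

def deg {n : ℕ} (m : Fin n →₀ ℕ) : ℕ := ∑ i, m i

lemma deg_add (p q : Fin n →₀ ℕ) : deg (p + q) = deg p + deg q := by
  simp [deg, Finsupp.add_apply, Finset.sum_add_distrib]

lemma deg_single (i : Fin n) : deg (Finsupp.single i 1 : Fin n →₀ ℕ) = 1 := by
  simp [deg, Finsupp.single_apply]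

lemma deg_zero_iff (m : Fin n →₀ ℕ) : deg m = 0 ↔ m = 0 := by
  constructor
  · intro h
    ext a
    have := Finset.sum_eq_zero_iff.mp h a (Finset.mem_univ a)
    simpa using this
  · rintro rfl; simp [deg]

lemma deg_move {m : Fin n →₀ ℕ} {k : Fin n} (h : m k ≠ 0) (j : Fin n) :
    deg (m - Finsupp.single k 1 + Finsupp.single j 1) = deg m := by
  have h1 : deg (m - Finsupp.single k 1 + Finsupp.single k 1 : Fin n →₀ ℕ) = deg m := by
    rw [sub_add_single h]
  rw [deg_add, deg_single] at h1
  rw [deg_add, deg_single]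
  omega

lemma deg_eq_one {m : Fin n →₀ ℕ} (h : deg m = 1) : ∃ k, m = Finsupp.single k 1 := by
  have hex : ∃ k, m k ≠ 0 := by
    by_contra hc
    push_neg at hc
    have : m = 0 := by ext a; simp [hc a]
    rw [this] at h
    simp [deg] at h
  obtain ⟨k, hk⟩ := hex
  have hsplit := Finset.add_sum_erase Finset.univ (fun i => m i) (Finset.mem_univ k)
  have hsum : m k + ∑ i ∈ Finset.univ.erase k, m i = 1 := by
    rw [hsplit]; exact h
  have hmk : m k = 1 := by omega
  have hrest : ∀ a, a ≠ k → m a = 0 := by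
    intro a ha
    have h0 : ∑ i ∈ Finset.univ.erase k, m i = 0 := by omega
    exact Finset.sum_eq_zero_iff.mp h0 a (Finset.mem_erase.mpr ⟨ha, Finset.mem_univ a⟩)
  refine ⟨k, ?_⟩
  ext a
  rcases eq_or_ne a k with rfl | ha
  · simp [hmk, Finsupp.single_apply]
  · simp [hrest a ha, Finsupp.single_apply, Ne.symm ha]

lemma coeff_lieD_linVF (B : Matrix (Fin n) (Fin n) ℂ) (φ : MvPowerSeries (Fin n) ℂ)
    (m : Fin n →₀ ℕ) :
    coeff (R := ℂ) m (lieD (linVF B) φ)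
      = ∑ j, ∑ k, (if m k = 0 then 0 else
          B j k * ((((m - Finsupp.single k 1 : Fin n →₀ ℕ) j : ℕ) : ℂ) + 1)
            * coeff (R := ℂ) (m - Finsupp.single k 1 + Finsupp.single j 1) φ) := by
  rw [lieD_linVF_expand, map_sum]
  refine Finset.sum_congr rfl fun j _ => ?_
  rw [map_sum]
  refine Finset.sum_congr rfl fun k _ => ?_
  rw [coeff_C_mul, coeff_X_mul]
  split_ifs with h
  · simp
  · rw [coeff_psD]; ring

lemma coeff_lieD_linVF_congr (B : Matrix (Fin n) (Fin n) ℂ)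
    {φ ρ : MvPowerSeries (Fin n) ℂ} (m : Fin n →₀ ℕ)
    (h : ∀ m', deg m' = deg m → coeff (R := ℂ) m' φ = coeff (R := ℂ) m' ρ) :
    coeff (R := ℂ) m (lieD (linVF B) φ) = coeff (R := ℂ) m (lieD (linVF B) ρ) := by
  rw [coeff_lieD_linVF, coeff_lieD_linVF]
  refine Finset.sum_congr rfl fun j _ => Finset.sum_congr rfl fun k _ => ?_
  split_ifs with hk
  · rfl
  · rw [h _ (deg_move hk j)]

def homog (d : ℕ) (φ : MvPowerSeries (Fin n) ℂ) : Prop :=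
  ∀ m, deg m ≠ d → coeff (R := ℂ) m φ = 0

def lowzero (d : ℕ) (φ : MvPowerSeries (Fin n) ℂ) : Prop :=
  ∀ m, deg m < d → coeff (R := ℂ) m φ = 0

lemma homog_lieD_linVF (B : Matrix (Fin n) (Fin n) ℂ) {d : ℕ}
    {φ : MvPowerSeries (Fin n) ℂ} (h : homog d φ) : homog d (lieD (linVF B) φ) := by
  intro m hm
  rw [coeff_lieD_linVF]
  refine Finset.sum_eq_zero fun j _ => Finset.sum_eq_zero fun k _ => ?_
  split_ifs with hk
  · rfl
  · rw [h _ (by rw [deg_move hk j]; exact hm)]; ring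

lemma lowzero_lieD_linVF (B : Matrix (Fin n) (Fin n) ℂ) {d : ℕ}
    {φ : MvPowerSeries (Fin n) ℂ} (h : lowzero d φ) : lowzero d (lieD (linVF B) φ) := by
  intro m hm
  rw [coeff_lieD_linVF]
  refine Finset.sum_eq_zero fun j _ => Finset.sum_eq_zero fun k _ => ?_
  split_ifs with hk
  · rfl
  · rw [h _ (by rw [deg_move hk j]; exact hm)]; ring

lemma lowzero_C_mul {d : ℕ} (c : ℂ) {φ : MvPowerSeries (Fin n) ℂ} (h : lowzero d φ) :
    lowzero d (C (σ := Fin n) (R := ℂ) c * φ) := by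
  intro m hm
  rw [coeff_C_mul, h m hm, mul_zero]

lemma lowzero_sub {d : ℕ} {φ ρ : MvPowerSeries (Fin n) ℂ}
    (h1 : lowzero d φ) (h2 : lowzero d ρ) : lowzero d (φ - ρ) := by
  intro m hm
  rw [map_sub, h1 m hm, h2 m hm, sub_zero]

noncomputable def Hd (d : ℕ) (φ : MvPowerSeries (Fin n) ℂ) : MvPowerSeries (Fin n) ℂ :=
  fun m => if deg m = d then coeff (R := ℂ) m φ else 0

lemma coeff_Hd (d : ℕ) (φ : MvPowerSeries (Fin n) ℂ) (m : Fin n →₀ ℕ) :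
    coeff (R := ℂ) m (Hd d φ) = if deg m = d then coeff (R := ℂ) m φ else 0 := rfl

lemma homog_Hd (d : ℕ) (φ : MvPowerSeries (Fin n) ℂ) : homog d (Hd d φ) := by
  intro m hm
  rw [coeff_Hd, if_neg hm]

lemma Hd_lieD_linVF (B : Matrix (Fin n) (Fin n) ℂ) (d : ℕ) (φ : MvPowerSeries (Fin n) ℂ) :
    Hd d (lieD (linVF B) φ) = lieD (linVF B) (Hd d φ) := by
  ext m
  rw [coeff_Hd]
  split_ifs with h
  · exact coeff_lieD_linVF_congr B m fun m' hm' => by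
      rw [coeff_Hd, if_pos (by rw [hm', h])]
  · exact ((homog_lieD_linVF B (homog_Hd d φ)) m h).symm

lemma Hd_C_mul (d : ℕ) (c : ℂ) (φ : MvPowerSeries (Fin n) ℂ) :
    Hd d (C (σ := Fin n) (R := ℂ) c * φ) = C (σ := Fin n) (R := ℂ) c * Hd d φ := by
  ext m
  rw [coeff_Hd, coeff_C_mul, coeff_C_mul, coeff_Hd]
  split_ifs with h
  · rfl
  · rw [mul_zero]

lemma Hd_sub (d : ℕ) (φ ρ : MvPowerSeries (Fin n) ℂ) :
    Hd d (φ - ρ) = Hd d φ - Hd d ρ := by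
  ext m
  rw [coeff_Hd, map_sub, map_sub, coeff_Hd, coeff_Hd]
  split_ifs with h
  · rfl
  · rw [sub_zero]

lemma lieD_vsub (g h : FVF n) (φ : MvPowerSeries (Fin n) ℂ) :
    lieD (fun i => g i - h i) φ = lieD g φ - lieD h φ := by
  simp only [lieD_def, sub_mul, Finset.sum_sub_distrib]

lemma coeff_linVF_zero (B : Matrix (Fin n) (Fin n) ℂ) (i : Fin n) :
    coeff (R := ℂ) 0 (linVF B i) = 0 := by
  rw [linVF_def, map_sum]
  refine Finset.sum_eq_zero fun j _ => ?_
  rw [coeff_C_mul, coeff_X]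
  rw [if_neg (fun hc : (0 : Fin n →₀ ℕ) = Finsupp.single j 1 => by
    have := DFunLike.congr_fun hc j
    simp [Finsupp.single_apply] at this)]
  ring

lemma coeff_linVF_single (B : Matrix (Fin n) (Fin n) ℂ) (i k : Fin n) :
    coeff (R := ℂ) (Finsupp.single k 1) (linVF B i) = B i k := by
  rw [linVF_def, map_sum]
  rw [Finset.sum_eq_single k]
  · rw [coeff_C_mul, coeff_X, if_pos rfl, mul_one]
  · intro j _ hj
    rw [coeff_C_mul, coeff_X]
    rw [if_neg (fun hc : (Finsupp.single k 1 : Fin n →₀ ℕ) = Finsupp.single j 1 => by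
      have := DFunLike.congr_fun hc k
      simp [Finsupp.single_apply, hj] at this)]
    ring
  · intro h; exact absurd (Finset.mem_univ k) h

lemma coeff_zero_divPS (A : Matrix (Fin n) (Fin n) ℂ) (f : FVF n) (hlin : hasLin f A) :
    coeff (R := ℂ) 0 (divPS f) = Matrix.trace A := by
  rw [show divPS f = ∑ i, psD i (f i) from rfl, map_sum]
  rw [show Matrix.trace A = ∑ i, A i i from rfl]
  refine Finset.sum_congr rfl fun i _ => ?_
  rw [coeff_psD, zero_add]
  have h0 : ((0 : Fin n →₀ ℕ) i : ℕ) = 0 := rfl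
  rw [h0, hlin.2 i i]
  simp

lemma star_lemma (A : Matrix (Fin n) (Fin n) ℂ) (f : FVF n) (hlin : hasLin f A)
    {d : ℕ} {φ : MvPowerSeries (Fin n) ℂ}
    (hM : lieD f φ = divPS f * φ) (hlz : lowzero d φ) :
    ∀ m, deg m = d → coeff (R := ℂ) m (lieD (linVF A) φ) = Matrix.trace A * coeff (R := ℂ) m φ := by
  classical
  intro m hm
  -- the remainder vector field r := f - linVF A vanishes to second order
  set r : FVF n := fun i => f i - linVF A i with hr
  have hrlow : ∀ i p, deg p ≤ 1 → coeff (R := ℂ) p (r i) = 0 := by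
    intro i p hp
    rw [hr]
    simp only [map_sub]
    interval_cases hdp : deg p
    · rw [(deg_zero_iff p).mp hdp, hlin.1 i, coeff_linVF_zero, sub_zero]
    · obtain ⟨k, rfl⟩ := deg_eq_one hdp
      rw [hlin.2 i k, coeff_linVF_single, sub_self]
  have hsplit : coeff (R := ℂ) m (lieD f φ)
      = coeff (R := ℂ) m (lieD (linVF A) φ) + coeff (R := ℂ) m (lieD r φ) := by
    have : lieD f φ = lieD (linVF A) φ + lieD r φ := by
      rw [hr, lieD_vsub]
      ring
    rw [this, map_add]
  have hrzero : coeff (R := ℂ) m (lieD r φ) = 0 := by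
    rw [lieD_def, map_sum]
    refine Finset.sum_eq_zero fun j _ => ?_
    rw [coeff_mul]
    refine Finset.sum_eq_zero fun x hx => ?_
    rw [HasAntidiagonal.mem_antidiagonal] at hx
    have hdeg : deg x.1 + deg x.2 = d := by rw [← deg_add, hx, hm]
    by_cases hp : deg x.1 ≤ 1
    · rw [hrlow j x.1 hp, zero_mul]
    · have hq : deg x.2 + 1 < d := by omega
      rw [coeff_psD, hlz (x.2 + Finsupp.single j 1) (by rw [deg_add, deg_single]; omega)]
      ring
  have hdiv : coeff (R := ℂ) m (divPS f * φ) = Matrix.trace A * coeff (R := ℂ) m φ := by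
    rw [coeff_mul]
    rw [Finset.sum_eq_single ((0 : Fin n →₀ ℕ), m)]
    · rw [coeff_zero_divPS A f hlin]
    · intro x hx hne
      rw [HasAntidiagonal.mem_antidiagonal] at hx
      rcases eq_or_ne x.1 0 with h1 | h1
      · exfalso
        apply hne
        have : x.2 = m := by rw [← hx, h1, zero_add]
        rw [← h1, ← this]
      · have : 1 ≤ deg x.1 := by
          by_contra hc
          push_neg at hc
          exact h1 ((deg_zero_iff x.1).mp (by omega))
        have hdeg : deg x.1 + deg x.2 = d := by rw [← deg_add, hx, hm]
        rw [hlz x.2 (by omega), mul_zero]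
    · intro hmem
      exact absurd (HasAntidiagonal.mem_antidiagonal.mpr (zero_add m)) hmem
  have := congrArg (coeff (R := ℂ) m) hM
  rw [hsplit, hrzero, add_zero, hdiv] at this
  exact this

section Slots
open Matrix


abbrev TD (n d : ℕ) := (Fin d → Fin n) → ℂ

noncomputable def slotp {d : ℕ} (B : Matrix (Fin n) (Fin n) ℂ) (p : Fin d) (F : TD n d) :
    TD n d :=
  fun w => ∑ c, B c (w p) * F (Function.update w p c)

lemma slotp_add {d : ℕ} (B : Matrix (Fin n) (Fin n) ℂ) (p : Fin d) (F G : TD n d) :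
    slotp B p (F + G) = slotp B p F + slotp B p G := by
  funext w
  simp [slotp, mul_add, Finset.sum_add_distrib]

lemma slotp_smul {d : ℕ} (B : Matrix (Fin n) (Fin n) ℂ) (p : Fin d) (a : ℂ) (F : TD n d) :
    slotp B p (a • F) = a • slotp B p F := by
  funext w
  simp [slotp, Finset.mul_sum]
  exact Finset.sum_congr rfl fun c _ => by ring

lemma slotp_slotp {d : ℕ} (B B' : Matrix (Fin n) (Fin n) ℂ) (p : Fin d) (F : TD n d) :
    slotp B p (slotp B' p F) = slotp (B' * B) p F := by
  funext w
  simp only [slotp, Finset.mul_sum]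
  rw [Finset.sum_comm]
  refine Finset.sum_congr rfl fun c' _ => ?_
  rw [Matrix.mul_apply, Finset.sum_mul]
  refine Finset.sum_congr rfl fun c _ => ?_
  rw [Function.update_idem, Function.update_self]
  ring

lemma slotp_comm {d : ℕ} (B : Matrix (Fin n) (Fin n) ℂ) {p q : Fin d} (hpq : p ≠ q)
    (F : TD n d) : slotp B p (slotp B q F) = slotp B q (slotp B p F) := by
  funext w
  simp only [slotp, Finset.mul_sum]
  rw [Finset.sum_comm]
  refine Finset.sum_congr rfl fun c _ => Finset.sum_congr rfl fun c' _ => ?_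
  rw [Function.update_of_ne hpq.symm, Function.update_of_ne hpq,
    Function.update_comm hpq]
  ring

noncomputable def slotE {d : ℕ} (B : Matrix (Fin n) (Fin n) ℂ) (p : Fin d) :
    Module.End ℂ (TD n d) where
  toFun := slotp B p
  map_add' := slotp_add B p
  map_smul' := slotp_smul B p

lemma slotE_apply {d : ℕ} (B : Matrix (Fin n) (Fin n) ℂ) (p : Fin d) (F : TD n d) :
    slotE B p F = slotp B p F := rfl

lemma slotE_mul {d : ℕ} (B B' : Matrix (Fin n) (Fin n) ℂ) (p : Fin d) :
    slotE B p * slotE B' p = slotE (B' * B) p := by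
  apply LinearMap.ext
  intro F
  exact slotp_slotp B B' p F

lemma slotE_pow {d : ℕ} (B : Matrix (Fin n) (Fin n) ℂ) (p : Fin d) (k : ℕ) :
    (slotE B p) ^ (k + 1) = slotE (B ^ (k + 1)) p := by
  induction k with
  | zero => simp [pow_one]
  | succ k ih =>
      rw [pow_succ, ih, slotE_mul, ← pow_succ']

lemma slotp_zero {d : ℕ} (p : Fin d) (F : TD n d) : slotp (0 : Matrix (Fin n) (Fin n) ℂ) p F = 0 := by
  funext w
  simp [slotp]

lemma slotE_nilpotent {d : ℕ} {B : Matrix (Fin n) (Fin n) ℂ} (hB : IsNilpotent B)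
    (p : Fin d) : IsNilpotent (slotE B p) := by
  obtain ⟨r, hr⟩ := hB
  refine ⟨r + 1, ?_⟩
  rw [slotE_pow]
  have h0 : B ^ (r + 1) = 0 := by rw [pow_succ, hr, zero_mul]
  rw [h0]
  apply LinearMap.ext
  intro F
  exact slotp_zero p F

noncomputable def LtilE {d : ℕ} (B : Matrix (Fin n) (Fin n) ℂ) : Module.End ℂ (TD n d) :=
  ∑ p, slotE B p

lemma LtilE_nilpotent {d : ℕ} {B : Matrix (Fin n) (Fin n) ℂ} (hB : IsNilpotent B) :
    IsNilpotent (LtilE (d := d) B) := by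
  refine Commute.isNilpotent_sum (fun p _ => slotE_nilpotent hB p) ?_
  intro p q hp hq
  rcases eq_or_ne p q with rfl | hpq
  · exact Commute.refl _
  · apply LinearMap.ext
    intro F
    exact slotp_comm B hpq F


noncomputable def CP {d : ℕ} (P : Matrix (Fin n) (Fin n) ℂ) (F : TD n d) : TD n d :=
  fun w => ∑ w' : Fin d → Fin n, (∏ p, P (w p) (w' p)) * F w'

lemma CP_CP {d : ℕ} (P Q : Matrix (Fin n) (Fin n) ℂ) (F : TD n d) :
    CP P (CP Q F) = CP (P * Q) F := by
  funext w
  simp only [CP, Finset.mul_sum]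
  rw [Finset.sum_comm]
  refine Finset.sum_congr rfl fun w'' _ => ?_
  have key : ∑ w' : Fin d → Fin n, ∏ p, (P (w p) (w' p) * Q (w' p) (w'' p))
      = ∏ p, (P * Q) (w p) (w'' p) := by
    have h1 : ∀ p : Fin d, (P * Q) (w p) (w'' p) = ∑ c, P (w p) c * Q c (w'' p) :=
      fun p => Matrix.mul_apply
    rw [Finset.prod_congr rfl fun p _ => h1 p]
    rw [Finset.prod_univ_sum, Fintype.piFinset_univ]
  rw [← key, Finset.sum_mul]
  refine Finset.sum_congr rfl fun w' _ => ?_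
  rw [Finset.prod_mul_distrib]
  ring

lemma CP_one {d : ℕ} (F : TD n d) : CP (1 : Matrix (Fin n) (Fin n) ℂ) F = F := by
  funext w
  rw [CP, Finset.sum_eq_single w]
  · have h1 : ∀ p : Fin d, (1 : Matrix (Fin n) (Fin n) ℂ) (w p) (w p) = 1 :=
      fun p => Matrix.one_apply_eq _
    rw [Finset.prod_congr rfl fun p _ => h1 p, Finset.prod_const_one, one_mul]
  · intro w' _ hw'
    obtain ⟨p, hp⟩ := Function.ne_iff.mp (Ne.symm hw')
    have hz : (1 : Matrix (Fin n) (Fin n) ℂ) (w p) (w' p) = 0 := Matrix.one_apply_ne hp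
    rw [Finset.prod_eq_zero (Finset.mem_univ p) hz, zero_mul]
  · intro h; exact absurd (Finset.mem_univ w) h

lemma CP_sub {d : ℕ} (P : Matrix (Fin n) (Fin n) ℂ) (F G : TD n d) :
    CP P (F - G) = CP P F - CP P G := by
  funext w
  simp [CP, mul_sub, Finset.sum_sub_distrib]

lemma CP_smulfun {d : ℕ} (P : Matrix (Fin n) (Fin n) ℂ) (c : ℂ) (F : TD n d) :
    CP P (fun w => c * F w) = fun w => c * CP P F w := by
  funext w
  simp only [CP, Finset.mul_sum]
  exact Finset.sum_congr rfl fun w' _ => by ring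

lemma CP_zero {d : ℕ} (P : Matrix (Fin n) (Fin n) ℂ) : CP (d := d) P 0 = 0 := by
  funext w
  simp [CP]

lemma slotp_CP {d : ℕ} {B P D : Matrix (Fin n) (Fin n) ℂ}
    (hPD : Bᵀ * P = P * Dᵀ) (p : Fin d) (F : TD n d) :
    slotp B p (CP P F) = CP P (slotp D p F) := by
  funext w
  have hL : slotp B p (CP P F) w
      = ∑ w' : Fin d → Fin n, ((∑ c, B c (w p) * P c (w' p))
          * ∏ q ∈ Finset.univ.erase p, P (w q) (w' q)) * F w' := by
    simp only [slotp, CP, Finset.mul_sum]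
    rw [Finset.sum_comm]
    refine Finset.sum_congr rfl fun w' _ => ?_
    rw [Finset.sum_mul, Finset.sum_mul]
    refine Finset.sum_congr rfl fun c _ => ?_
    rw [← Finset.mul_prod_erase Finset.univ _ (Finset.mem_univ p), Function.update_self]
    rw [Finset.prod_congr rfl (fun q hq =>
      by rw [Function.update_of_ne (Finset.mem_erase.mp hq).1])]
    ring
  have hR : CP P (slotp D p F) w
      = ∑ w' : Fin d → Fin n, ((∑ c, P (w p) c * D (w' p) c)
          * ∏ q ∈ Finset.univ.erase p, P (w q) (w' q)) * F w' := by
    have einv : Function.Involutive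
        (fun x : (Fin d → Fin n) × Fin n => (Function.update x.1 p x.2, x.1 p)) := by
      rintro ⟨w', c⟩
      refine Prod.ext ?_ ?_
      · simp only [Function.update_idem]
        exact Function.update_eq_self p w'
      · exact Function.update_self p c w'
    have step1 : CP P (slotp D p F) w
        = ∑ x : (Fin d → Fin n) × Fin n,
            (∏ q, P (w q) (x.1 q)) * (D x.2 (x.1 p) * F (Function.update x.1 p x.2)) := by
      rw [Fintype.sum_prod_type]
      simp only [CP, slotp, Finset.mul_sum]
    have step2 : (∑ x : (Fin d → Fin n) × Fin n,
            (∏ q, P (w q) (x.1 q)) * (D x.2 (x.1 p) * F (Function.update x.1 p x.2)))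
        = ∑ x : (Fin d → Fin n) × Fin n,
            ((P (w p) x.2 * D (x.1 p) x.2)
              * ∏ q ∈ Finset.univ.erase p, P (w q) (x.1 q)) * F x.1 := by
      refine Fintype.sum_equiv einv.toPerm _ _ ?_
      rintro ⟨w', c⟩
      simp only [Function.Involutive.coe_toPerm]
      have hsplit : (∏ q, P (w q) (w' q))
          = P (w p) (w' p) * ∏ q ∈ Finset.univ.erase p, P (w q) (w' q) :=
        (Finset.mul_prod_erase Finset.univ _ (Finset.mem_univ p)).symm
      rw [hsplit]
      have h1 : Function.update w' p c p = c := Function.update_self p c w'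
      have h2 : ∏ q ∈ Finset.univ.erase p, P (w q) (Function.update w' p c q)
          = ∏ q ∈ Finset.univ.erase p, P (w q) (w' q) :=
        Finset.prod_congr rfl fun q hq => by
          rw [Function.update_of_ne (Finset.mem_erase.mp hq).1]
      rw [h1, h2]
      ring
    rw [step1, step2, Fintype.sum_prod_type]
    refine Finset.sum_congr rfl fun w' _ => ?_
    rw [Finset.sum_mul, Finset.sum_mul]
  rw [hL, hR]
  refine Finset.sum_congr rfl fun w' _ => ?_
  have hentry : (∑ c, B c (w p) * P c (w' p)) = ∑ c, P (w p) c * D (w' p) c := by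
    have h1 : (Bᵀ * P) (w p) (w' p) = (P * Dᵀ) (w p) (w' p) := by rw [hPD]
    rw [Matrix.mul_apply, Matrix.mul_apply] at h1
    calc (∑ c, B c (w p) * P c (w' p)) = ∑ c, Bᵀ (w p) c * P c (w' p) := by
          exact Finset.sum_congr rfl fun c _ => by rw [Matrix.transpose_apply]
      _ = ∑ c, P (w p) c * Dᵀ c (w' p) := h1
      _ = ∑ c, P (w p) c * D (w' p) c := by
          exact Finset.sum_congr rfl fun c _ => by rw [Matrix.transpose_apply]
  rw [hentry]

lemma Ltil_CP {d : ℕ} {B P D : Matrix (Fin n) (Fin n) ℂ}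
    (hPD : Bᵀ * P = P * Dᵀ) (F : TD n d) :
    (∑ p, slotp B p (CP P F)) = CP P (fun w => ∑ p, slotp D p F w) := by
  have h1 : ∀ p : Fin d, slotp B p (CP P F) = CP P (slotp D p F) :=
    fun p => slotp_CP hPD p F
  funext w
  rw [Finset.sum_apply]
  rw [Finset.sum_congr rfl fun p _ => congrFun (h1 p) w]
  simp only [CP, Finset.mul_sum]
  rw [Finset.sum_comm]

lemma slotp_diag {d : ℕ} {D : Matrix (Fin n) (Fin n) ℂ} (hD : D.IsDiag)
    (p : Fin d) (F : TD n d) : slotp D p F = fun w => D (w p) (w p) * F w := by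
  funext w
  rw [slotp, Finset.sum_eq_single (w p)]
  · rw [Function.update_eq_self]
  · intro c _ hc
    rw [hD hc]
    ring
  · intro h; exact absurd (Finset.mem_univ (w p)) h

noncomputable def cnt {d : ℕ} (w : Fin d → Fin n) : Fin n →₀ ℕ :=
  ∑ p, Finsupp.single (w p) 1

lemma deg_sum' {α : Type*} (s : Finset α) (F : α → (Fin n →₀ ℕ)) :
    deg (∑ a ∈ s, F a) = ∑ a ∈ s, deg (F a) := by
  unfold deg
  rw [show (∑ i, (∑ a ∈ s, F a) i) = ∑ i, ∑ a ∈ s, F a i from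
    Finset.sum_congr rfl fun i _ => Finsupp.finset_sum_apply s F i]
  exact Finset.sum_comm

lemma deg_cnt {d : ℕ} (w : Fin d → Fin n) : deg (cnt w) = d := by
  rw [cnt, deg_sum']
  rw [Finset.sum_congr rfl fun p _ => deg_single (w p)]
  simp

lemma cnt_apply {d : ℕ} (w : Fin d → Fin n) (a : Fin n) :
    cnt w a = ∑ p, (if w p = a then 1 else 0) := by
  rw [cnt, Finsupp.finset_sum_apply]
  exact Finset.sum_congr rfl fun p _ => by rw [Finsupp.single_apply]

lemma cnt_update {d : ℕ} (w : Fin d → Fin n) (p : Fin d) (c : Fin n) :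
    cnt (Function.update w p c) = cnt w - Finsupp.single (w p) 1 + Finsupp.single c 1 := by
  have hL : ∀ a, cnt (Function.update w p c) a
      = (if c = a then 1 else 0) + ∑ q ∈ Finset.univ.erase p, (if w q = a then 1 else 0) := by
    intro a
    rw [cnt_apply, ← Finset.add_sum_erase Finset.univ _ (Finset.mem_univ p)]
    congr 1
    · rw [Function.update_self]
    · exact Finset.sum_congr rfl fun q hq => by
        rw [Function.update_of_ne (Finset.mem_erase.mp hq).1]
  have hW : ∀ a, cnt w a
      = (if w p = a then 1 else 0) + ∑ q ∈ Finset.univ.erase p, (if w q = a then 1 else 0) := by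
    intro a
    rw [cnt_apply, ← Finset.add_sum_erase Finset.univ _ (Finset.mem_univ p)]
  ext a
  rw [Finsupp.add_apply, Finsupp.tsub_apply, hL a, hW a, Finsupp.single_apply,
    Finsupp.single_apply]
  by_cases hca : c = a <;> by_cases hwa : w p = a <;> simp [hca, hwa] <;> omega

noncomputable def sig (d : ℕ) (φ : MvPowerSeries (Fin n) ℂ) : TD n d :=
  fun w => ((∏ i, Nat.factorial (cnt w i) : ℕ) : ℂ) * coeff (R := ℂ) (cnt w) φ

lemma sig_sub (d : ℕ) (φ ρ : MvPowerSeries (Fin n) ℂ) :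
    sig d (φ - ρ) = sig d φ - sig d ρ := by
  funext w
  simp only [sig, map_sub, Pi.sub_apply]
  ring

lemma sig_C_mul (d : ℕ) (c : ℂ) (φ : MvPowerSeries (Fin n) ℂ) :
    sig d (C (σ := Fin n) (R := ℂ) c * φ) = fun w => c * sig d φ w := by
  funext w
  simp only [sig, coeff_C_mul]
  ring

lemma sig_zero (d : ℕ) : sig (n := n) d 0 = 0 := by
  funext w
  simp [sig]

lemma prod_fact_add_single (b : Fin n →₀ ℕ) (k : Fin n) :
    (∏ i, Nat.factorial ((b + Finsupp.single k 1 : Fin n →₀ ℕ) i))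
      = (b k + 1) * ∏ i, Nat.factorial (b i) := by
  rw [← Finset.mul_prod_erase Finset.univ
      (fun i => Nat.factorial ((b + Finsupp.single k 1 : Fin n →₀ ℕ) i)) (Finset.mem_univ k),
    ← Finset.mul_prod_erase Finset.univ (fun i => Nat.factorial (b i)) (Finset.mem_univ k)]
  have h1 : (b + Finsupp.single k 1 : Fin n →₀ ℕ) k = b k + 1 := by
    rw [Finsupp.add_apply, Finsupp.single_apply, if_pos rfl]
  have h2 : ∀ i ∈ Finset.univ.erase k,
      Nat.factorial ((b + Finsupp.single k 1 : Fin n →₀ ℕ) i) = Nat.factorial (b i) := by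
    intro i hi
    rw [Finsupp.add_apply, Finsupp.single_apply,
      if_neg (Ne.symm (Finset.mem_erase.mp hi).1), add_zero]
  simp only [h1]
  rw [Finset.prod_congr rfl h2, Nat.factorial_succ, mul_assoc]

lemma fact_move {m : Fin n →₀ ℕ} {k : Fin n} (h : m k ≠ 0) (j : Fin n) :
    (((m - Finsupp.single k 1 : Fin n →₀ ℕ) j : ℕ) + 1) * ∏ i, Nat.factorial (m i)
      = m k * ∏ i, Nat.factorial
          ((m - Finsupp.single k 1 + Finsupp.single j 1 : Fin n →₀ ℕ) i) := by
  have hm : m = (m - Finsupp.single k 1) + Finsupp.single k 1 := (sub_add_single h).symm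
  have hmk : m k = (m - Finsupp.single k 1 : Fin n →₀ ℕ) k + 1 := by
    conv_lhs => rw [hm]
    rw [Finsupp.add_apply, Finsupp.single_apply, if_pos rfl]
  have h1 : (∏ i, Nat.factorial (m i))
      = ((m - Finsupp.single k 1 : Fin n →₀ ℕ) k + 1)
        * ∏ i, Nat.factorial ((m - Finsupp.single k 1 : Fin n →₀ ℕ) i) := by
    conv_lhs => rw [hm]
    exact prod_fact_add_single _ k
  have h2 : (∏ i, Nat.factorial
        ((m - Finsupp.single k 1 + Finsupp.single j 1 : Fin n →₀ ℕ) i))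
      = ((m - Finsupp.single k 1 : Fin n →₀ ℕ) j + 1)
        * ∏ i, Nat.factorial ((m - Finsupp.single k 1 : Fin n →₀ ℕ) i) :=
    prod_fact_add_single _ j
  rw [h1, h2, hmk]
  ring

lemma sum_word {d : ℕ} (w : Fin d → Fin n) (G : Fin n → ℂ) :
    (∑ p, G (w p)) = ∑ k, ((cnt w k : ℕ) : ℂ) * G k := by
  have h1 : ∀ p : Fin d, G (w p) = ∑ k, (if w p = k then G k else 0) := by
    intro p
    rw [Finset.sum_ite_eq Finset.univ (w p) G]
    simp
  rw [Finset.sum_congr rfl fun p _ => h1 p, Finset.sum_comm]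
  refine Finset.sum_congr rfl fun k _ => ?_
  rw [cnt_apply]
  push_cast
  rw [Finset.sum_mul]
  exact Finset.sum_congr rfl fun p _ => by split_ifs <;> simp

lemma sig_lieD (d : ℕ) (B : Matrix (Fin n) (Fin n) ℂ) (φ : MvPowerSeries (Fin n) ℂ) :
    sig d (lieD (linVF B) φ) = fun w => ∑ p, slotp B p (sig d φ) w := by
  funext w
  have hRW : (∑ p, slotp B p (sig d φ) w)
      = ∑ k, ((cnt w k : ℕ) : ℂ) * ∑ c, B c k *
          (((∏ i, Nat.factorial
              ((cnt w - Finsupp.single k 1 + Finsupp.single c 1 : Fin n →₀ ℕ) i) : ℕ) : ℂ)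
            * coeff (R := ℂ) (cnt w - Finsupp.single k 1 + Finsupp.single c 1) φ) := by
    rw [← sum_word w (fun k => ∑ c, B c k *
          (((∏ i, Nat.factorial
              ((cnt w - Finsupp.single k 1 + Finsupp.single c 1 : Fin n →₀ ℕ) i) : ℕ) : ℂ)
            * coeff (R := ℂ) (cnt w - Finsupp.single k 1 + Finsupp.single c 1) φ))]
    refine Finset.sum_congr rfl fun p _ => ?_
    rw [slotp]
    refine Finset.sum_congr rfl fun c _ => ?_
    rw [show sig d φ (Function.update w p c)
        = ((∏ i, Nat.factorial
            ((cnt w - Finsupp.single (w p) 1 + Finsupp.single c 1 : Fin n →₀ ℕ) i) : ℕ) : ℂ)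
          * coeff (R := ℂ) (cnt w - Finsupp.single (w p) 1 + Finsupp.single c 1) φ from by
      rw [sig, cnt_update]]
  rw [hRW, sig, coeff_lieD_linVF, Finset.mul_sum]
  rw [show (∑ j, ((∏ i, Nat.factorial (cnt w i) : ℕ) : ℂ) * ∑ k, (if cnt w k = 0 then 0 else
          B j k * ((((cnt w - Finsupp.single k 1 : Fin n →₀ ℕ) j : ℕ) : ℂ) + 1)
            * coeff (R := ℂ) (cnt w - Finsupp.single k 1 + Finsupp.single j 1) φ))
      = ∑ j, ∑ k, ((∏ i, Nat.factorial (cnt w i) : ℕ) : ℂ) * (if cnt w k = 0 then 0 else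
          B j k * ((((cnt w - Finsupp.single k 1 : Fin n →₀ ℕ) j : ℕ) : ℂ) + 1)
            * coeff (R := ℂ) (cnt w - Finsupp.single k 1 + Finsupp.single j 1) φ) from
    Finset.sum_congr rfl fun j _ => Finset.mul_sum _ _ _]
  rw [Finset.sum_comm]
  refine Finset.sum_congr rfl fun k _ => ?_
  rw [Finset.mul_sum]
  refine Finset.sum_congr rfl fun j _ => ?_
  by_cases hk : cnt w k = 0
  · rw [if_pos hk, hk]
    push_cast
    ring
  · rw [if_neg hk]
    have hfm := fact_move hk j
    have hfmC : ((((cnt w - Finsupp.single k 1 : Fin n →₀ ℕ) j : ℕ) : ℂ) + 1)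
        * ((∏ i, Nat.factorial (cnt w i) : ℕ) : ℂ)
        = ((cnt w k : ℕ) : ℂ) * ((∏ i, Nat.factorial
            ((cnt w - Finsupp.single k 1 + Finsupp.single j 1 : Fin n →₀ ℕ) i) : ℕ) : ℂ) := by
      exact_mod_cast congrArg (Nat.cast (R := ℂ)) hfm
    calc ((∏ i, Nat.factorial (cnt w i) : ℕ) : ℂ)
          * (B j k * ((((cnt w - Finsupp.single k 1 : Fin n →₀ ℕ) j : ℕ) : ℂ) + 1)
            * coeff (R := ℂ) (cnt w - Finsupp.single k 1 + Finsupp.single j 1) φ)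
        = ((((cnt w - Finsupp.single k 1 : Fin n →₀ ℕ) j : ℕ) : ℂ) + 1)
            * ((∏ i, Nat.factorial (cnt w i) : ℕ) : ℂ)
            * (B j k * coeff (R := ℂ) (cnt w - Finsupp.single k 1 + Finsupp.single j 1) φ) := by ring
      _ = ((cnt w k : ℕ) : ℂ) * ((∏ i, Nat.factorial
            ((cnt w - Finsupp.single k 1 + Finsupp.single j 1 : Fin n →₀ ℕ) i) : ℕ) : ℂ)
            * (B j k * coeff (R := ℂ) (cnt w - Finsupp.single k 1 + Finsupp.single j 1) φ) := by
          rw [hfmC]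
      _ = ((cnt w k : ℕ) : ℂ) * (B j k * (((∏ i, Nat.factorial
            ((cnt w - Finsupp.single k 1 + Finsupp.single j 1 : Fin n →₀ ℕ) i) : ℕ) : ℂ)
            * coeff (R := ℂ) (cnt w - Finsupp.single k 1 + Finsupp.single j 1) φ)) := by ring

lemma exists_word : ∀ (d : ℕ) (m : Fin n →₀ ℕ), deg m = d → ∃ w : Fin d → Fin n, cnt w = m := by
  intro d
  induction d with
  | zero =>
      intro m hm
      have hm0 : m = 0 := (deg_zero_iff m).mp hm
      refine ⟨fun p => p.elim0, ?_⟩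
      subst hm0
      rw [cnt]
      simp
  | succ d ih =>
      intro m hm
      have hex : ∃ k, m k ≠ 0 := by
        by_contra hc; push_neg at hc
        have hz : m = 0 := by ext a; simp [hc a]
        rw [hz] at hm
        simp [deg] at hm
      obtain ⟨k, hk⟩ := hex
      have hdm : deg (m - Finsupp.single k 1) = d := by
        have hsub := sub_add_single hk
        have h3 := deg_add (m - Finsupp.single k 1) (Finsupp.single k 1)
        rw [hsub, deg_single] at h3
        omega
      obtain ⟨w', hw'⟩ := ih (m - Finsupp.single k 1) hdm
      refine ⟨(Fin.cons k w' : Fin (d + 1) → Fin n), ?_⟩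
      have hcons : (∑ p : Fin d, Finsupp.single ((Fin.cons k w' : Fin (d + 1) → Fin n) p.succ) (1 : ℕ))
          = ∑ p : Fin d, Finsupp.single (w' p) (1 : ℕ) :=
        Finset.sum_congr rfl fun p _ =>
          congrArg (fun x => Finsupp.single x (1 : ℕ))
            (Fin.cons_succ (α := fun _ : Fin (d + 1) => Fin n) k w' p)
      rw [cnt, Fin.sum_univ_succ, Fin.cons_zero, hcons]
      rw [show (∑ p, Finsupp.single (w' p) (1 : ℕ)) = cnt w' from rfl, hw']
      rw [add_comm, sub_add_single hk]

lemma sig_eq_zero {d : ℕ} {φ : MvPowerSeries (Fin n) ℂ}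
    (hφ : homog d φ) (hs : sig d φ = 0) : φ = 0 := by
  ext m
  rw [map_zero]
  rcases eq_or_ne (deg m) d with hd | hd
  · obtain ⟨w, hw⟩ := exists_word d m hd
    have h1 : sig d φ w = 0 := by rw [hs]; rfl
    rw [sig, hw] at h1
    have h3 : ((∏ i, Nat.factorial (m i) : ℕ) : ℂ) ≠ 0 :=
      Nat.cast_ne_zero.mpr (Finset.prod_ne_zero_iff.mpr fun i _ => Nat.factorial_ne_zero _)
    exact (mul_eq_zero.mp h1).resolve_left h3
  · exact hφ m hd

lemma homog_C_mul {d : ℕ} (c : ℂ) {φ : MvPowerSeries (Fin n) ℂ} (h : homog d φ) :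
    homog d (C (σ := Fin n) (R := ℂ) c * φ) := by
  intro m hm
  rw [coeff_C_mul, h m hm, mul_zero]

lemma homog_sub {d : ℕ} {φ ρ : MvPowerSeries (Fin n) ℂ}
    (h1 : homog d φ) (h2 : homog d ρ) : homog d (φ - ρ) := by
  intro m hm
  rw [map_sub, h1 m hm, h2 m hm, sub_zero]

lemma linVF_add (As An : Matrix (Fin n) (Fin n) ℂ) (i : Fin n) :
    linVF (As + An) i = linVF As i + linVF An i := by
  rw [linVF_def, linVF_def, linVF_def, ← Finset.sum_add_distrib]
  refine Finset.sum_congr rfl fun j _ => ?_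
  rw [Matrix.add_apply, map_add, add_mul]

lemma trace_nilpotent {An : Matrix (Fin n) (Fin n) ℂ} (h : IsNilpotent An) :
    Matrix.trace An = 0 := by
  have h1 : IsNilpotent (Matrix.toLinAlgEquiv' An) := h.map (Matrix.toLinAlgEquiv' (R := ℂ))
  have h2 := LinearMap.isNilpotent_trace_of_isNilpotent h1
  have h3 : LinearMap.trace ℂ (Fin n → ℂ) (Matrix.toLinAlgEquiv' An) = Matrix.trace An := by
    rw [LinearMap.trace_eq_matrix_trace ℂ (Pi.basisFun ℂ (Fin n)),
      LinearMap.toMatrix_eq_toMatrix']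
    congr 1
    exact LinearMap.toMatrixAlgEquiv'_toLinAlgEquiv' An
  rw [h3] at h2
  exact h2.eq_zero

lemma Ltil_apply {d : ℕ} (B : Matrix (Fin n) (Fin n) ℂ) (F : TD n d) :
    LtilE B F = fun w => ∑ p, slotp B p F w := by
  rw [LtilE, LinearMap.sum_apply]
  funext w
  rw [Finset.sum_apply]
  rfl

lemma sig_iter_nilp {d : ℕ} (An : Matrix (Fin n) (Fin n) ℂ) (φ : MvPowerSeries (Fin n) ℂ) :
    ∀ k : ℕ, sig d ((fun ψ => lieD (linVF An) ψ)^[k] φ) = ((LtilE An) ^ k) (sig d φ) := by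
  intro k
  induction k with
  | zero => simp
  | succ k ih =>
      rw [Function.iterate_succ_apply', pow_succ']
      rw [sig_lieD, ih, Module.End.mul_apply, Ltil_apply]

lemma homog_iter_nilp {d : ℕ} (An : Matrix (Fin n) (Fin n) ℂ) {φ : MvPowerSeries (Fin n) ℂ}
    (h : homog d φ) (k : ℕ) : homog d ((fun ψ => lieD (linVF An) ψ)^[k] φ) := by
  induction k with
  | zero => exact h
  | succ k ih =>
      rw [Function.iterate_succ_apply']
      exact homog_lieD_linVF An ih

lemma nilp_kill {An : Matrix (Fin n) (Fin n) ℂ} (hnil : IsNilpotent An) (d : ℕ) :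
    ∃ K : ℕ, ∀ φ : MvPowerSeries (Fin n) ℂ, homog d φ →
      (fun ψ => lieD (linVF An) ψ)^[K] φ = 0 := by
  obtain ⟨K, hK⟩ := LtilE_nilpotent (d := d) hnil
  refine ⟨K, fun φ hφ => ?_⟩
  refine sig_eq_zero (homog_iter_nilp An hφ K) ?_
  rw [sig_iter_nilp, hK]
  rfl

noncomputable def LcT {n : ℕ} {d : ℕ} (B : Matrix (Fin n) (Fin n) ℂ) (c : ℂ) (F : TD n d) :
    TD n d :=
  fun w => (∑ p, slotp B p F w) - c * F w

lemma LcT_CP {d : ℕ} {B P D : Matrix (Fin n) (Fin n) ℂ} (c : ℂ)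
    (hPD : Bᵀ * P = P * Dᵀ) (F : TD n d) :
    LcT B c (CP P F) = CP P (LcT D c F) := by
  have h1 := Ltil_CP (d := d) hPD F
  have h2 : LcT D c F = (fun w => ∑ p, slotp D p F w) - (fun w => c * F w) := rfl
  rw [h2, CP_sub, ← h1, CP_smulfun]
  funext w
  simp only [LcT, Pi.sub_apply, Finset.sum_apply]

lemma LcT_CP_iter {d : ℕ} {B P D : Matrix (Fin n) (Fin n) ℂ} (c : ℂ)
    (hPD : Bᵀ * P = P * Dᵀ) (F : TD n d) (j : ℕ) :
    (LcT B c)^[j] (CP P F) = CP P ((LcT D c)^[j] F) := by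
  induction j with
  | zero => rfl
  | succ j ih =>
      rw [Function.iterate_succ_apply', Function.iterate_succ_apply', ih, LcT_CP c hPD]

lemma LcT_diag_iter {d : ℕ} {D : Matrix (Fin n) (Fin n) ℂ} (hdiag : D.IsDiag) (c : ℂ)
    (F : TD n d) (j : ℕ) (w : Fin d → Fin n) :
    (LcT D c)^[j] F w = ((∑ p, D (w p) (w p)) - c) ^ j * F w := by
  induction j with
  | zero => simp
  | succ j ih =>
      rw [Function.iterate_succ_apply']
      have h1 : LcT D c ((LcT D c)^[j] F) w
          = (∑ p, D (w p) (w p)) * (LcT D c)^[j] F w - c * (LcT D c)^[j] F w := by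
        rw [LcT]
        have h2 : (∑ p, slotp D p ((LcT D c)^[j] F) w)
            = ∑ p, D (w p) (w p) * (LcT D c)^[j] F w :=
          Finset.sum_congr rfl fun p _ => congrFun (slotp_diag hdiag p _) w
        rw [h2, ← Finset.sum_mul]
      rw [h1, ih, pow_succ]
      ring

lemma sig_Lc (d : ℕ) (B : Matrix (Fin n) (Fin n) ℂ) (c : ℂ) (φ : MvPowerSeries (Fin n) ℂ) :
    sig d (lieD (linVF B) φ - C (σ := Fin n) (R := ℂ) c * φ) = LcT B c (sig d φ) := by
  rw [sig_sub, sig_lieD, sig_C_mul]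
  funext w
  rw [LcT]
  rfl

lemma ss_transfer {As : Matrix (Fin n) (Fin n) ℂ} (hss : IsDiagonalizable As) (c : ℂ)
    {d : ℕ} {v : MvPowerSeries (Fin n) ℂ} (hv : homog d v) (k : ℕ)
    (hk : (fun φ => lieD (linVF As) φ - C (σ := Fin n) (R := ℂ) c * φ)^[k] v = 0) :
    lieD (linVF As) v - C (σ := Fin n) (R := ℂ) c * v = 0 := by
  rcases Nat.eq_zero_or_pos k with rfl | hkpos
  · rw [Function.iterate_zero_apply] at hk
    rw [hk, lieD_zero, mul_zero, sub_zero]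
  obtain ⟨P₀, hP₀u, hdiag⟩ := hss
  set D := P₀⁻¹ * As * P₀ with hD
  have hdet : IsUnit P₀ᵀ.det := by
    rw [Matrix.det_transpose]
    exact (Matrix.isUnit_iff_isUnit_det P₀).mp hP₀u
  have hQ12 : P₀ᵀ⁻¹ * P₀ᵀ = 1 := Matrix.nonsing_inv_mul _ hdet
  have hQ21 : P₀ᵀ * P₀ᵀ⁻¹ = 1 := Matrix.mul_nonsing_inv _ hdet
  have hPD : Asᵀ * P₀ᵀ⁻¹ = P₀ᵀ⁻¹ * Dᵀ := by
    have hDT : Dᵀ = P₀ᵀ * Asᵀ * P₀ᵀ⁻¹ := by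
      rw [hD, Matrix.transpose_mul, Matrix.transpose_mul, Matrix.transpose_nonsing_inv]
      rw [Matrix.mul_assoc]
    rw [hDT, ← Matrix.mul_assoc, ← Matrix.mul_assoc, hQ12, Matrix.one_mul]
  have sig_iter : ∀ j : ℕ,
      sig d ((fun φ => lieD (linVF As) φ - C (σ := Fin n) (R := ℂ) c * φ)^[j] v)
        = (LcT As c)^[j] (sig d v) := by
    intro j
    induction j with
    | zero => rfl
    | succ j ih =>
        rw [Function.iterate_succ_apply', Function.iterate_succ_apply', sig_Lc, ih]
  have hTk : (LcT As c)^[k] (sig d v) = 0 := by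
    rw [← sig_iter, hk, sig_zero]
  have hGH : sig d v = CP P₀ᵀ⁻¹ (CP P₀ᵀ (sig d v)) := by
    rw [CP_CP, hQ12, CP_one]
  have hSDk : (LcT D c)^[k] (CP P₀ᵀ (sig d v)) = 0 := by
    have h0 : CP P₀ᵀ⁻¹ ((LcT D c)^[k] (CP P₀ᵀ (sig d v))) = 0 := by
      rw [← LcT_CP_iter c hPD, ← hGH]
      exact hTk
    have h1 := congrArg (CP P₀ᵀ) h0
    rw [CP_CP, hQ21, CP_one, CP_zero] at h1
    exact h1
  have hSDH : LcT D c (CP P₀ᵀ (sig d v)) = 0 := by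
    funext w
    have h2 := congrFun hSDk w
    rw [LcT_diag_iter hdiag c _ k w] at h2
    have h4 := LcT_diag_iter hdiag c (CP P₀ᵀ (sig d v)) 1 w
    rw [Function.iterate_one] at h4
    have h5 : (0 : TD n d) w = 0 := rfl
    rw [h4, pow_one, h5]
    rcases mul_eq_zero.mp h2 with h | h
    · rw [pow_eq_zero_iff hkpos.ne'] at h
      rw [h, zero_mul]
    · rw [h, mul_zero]
  have hTG : LcT As c (sig d v) = 0 := by
    rw [hGH, LcT_CP c hPD, hSDH, CP_zero]
  have hfin : sig d (lieD (linVF As) v - C (σ := Fin n) (R := ℂ) c * v) = 0 := by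
    rw [sig_Lc, hTG]
  exact sig_eq_zero (homog_sub (homog_lieD_linVF As hv) (homog_C_mul c hv)) hfin

end Slots

end S18

/-- For `f = A_s + ⋯` in Poincaré–Dulac normal form:
(a) `div f` is a formal first integral of `A_s`;
(b) any formal inverse Jacobi multiplier `ψ` of `f` satisfies
`X_{A_s}(ψ) = (div A_s)·ψ`. -/
theorem stmt_18 {n : ℕ} (A As An : Matrix (Fin n) (Fin n) ℂ)
    (hJC : A = As + An) (hss : IsDiagonalizable As) (hnil : IsNilpotent An)
    (hcomm : As * An = An * As)
    (f : FVF n) (hlin : hasLin f A) (hPDNF : fbr (linVF As) f = 0) :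
    lieD (linVF As) (divPS f) = 0 ∧
    ∀ ψ : MvPowerSeries (Fin n) ℂ, ψ ≠ 0 → lieD f ψ = divPS f * ψ →
      lieD (linVF As) ψ = MvPowerSeries.C (σ := Fin n) (R := ℂ) (Matrix.trace As) * ψ := by
  constructor
  · exact S18.part_a As f hPDNF
  · intro ψ hψ hM
    classical
    set c := Matrix.trace As with hc
    have htrA : Matrix.trace A = c := by
      rw [hJC, Matrix.trace_add, S18.trace_nilpotent hnil, add_zero]
    have hlieA : ∀ φ : MvPowerSeries (Fin n) ℂ,
        lieD (linVF A) φ = lieD (linVF As) φ + lieD (linVF An) φ := by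
      intro φ
      rw [hJC]
      have hvf : linVF (As + An) = (fun i => linVF As i + linVF An i) :=
        funext fun i => S18.linVF_add As An i
      rw [hvf]
      exact S18.lieD_vadd _ _ φ
    set Lc : MvPowerSeries (Fin n) ℂ → MvPowerSeries (Fin n) ℂ :=
      fun φ => lieD (linVF As) φ - MvPowerSeries.C (σ := Fin n) (R := ℂ) c * φ with hLc
    have hLcApp : ∀ φ, Lc φ = lieD (linVF As) φ - MvPowerSeries.C (σ := Fin n) (R := ℂ) c * φ :=
      fun φ => rfl
    have hMstep : ∀ φ, lieD f φ = divPS f * φ → lieD f (Lc φ) = divPS f * (Lc φ) := by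
      intro φ hφ
      have hA0 : lieD (linVF As) (lieD f φ) - lieD f (lieD (linVF As) φ)
          = lieD (fbr (linVF As) f) φ := S18.lieD_lieD _ _ φ
      have hz : lieD (fbr (linVF As) f) φ = 0 := by
        rw [hPDNF]
        show (∑ j, (0 : FVF n) j * psD j φ) = 0
        simp
      have hcommute : lieD f (lieD (linVF As) φ) = lieD (linVF As) (lieD f φ) := by
        rw [hz] at hA0
        exact (sub_eq_zero.mp hA0).symm
      rw [hLcApp φ, S18.lieD_sub, S18.lieD_C_mul, hcommute, hφ]
      rw [S18.lieD_mul, S18.part_a As f hPDNF, zero_mul, zero_add]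
      ring
    have hMk : ∀ k, lieD f (Lc^[k] ψ) = divPS f * (Lc^[k] ψ) := by
      intro k
      induction k with
      | zero => exact hM
      | succ k ih =>
          rw [Function.iterate_succ_apply']
          exact hMstep _ ih
    have main : ∀ d : ℕ, ∀ m : Fin n →₀ ℕ, S18.deg m = d →
        MvPowerSeries.coeff (R := ℂ) m (Lc ψ) = 0 := by
      intro d
      induction d using Nat.strong_induction_on with
      | _ d ih =>
        intro m hm
        have hlz1 : S18.lowzero d (Lc ψ) := fun m' hm' => ih (S18.deg m') (by omega) m' rfl
        have hlzk : ∀ k, S18.lowzero d (Lc^[k] (Lc ψ)) := by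
          intro k
          induction k with
          | zero => exact hlz1
          | succ k ihk =>
              rw [Function.iterate_succ_apply']
              exact S18.lowzero_sub (S18.lowzero_lieD_linVF As ihk) (S18.lowzero_C_mul c ihk)
        have hHdLc : ∀ φ, S18.Hd d (Lc φ) = Lc (S18.Hd d φ) := by
          intro φ
          rw [hLcApp, hLcApp, S18.Hd_sub, S18.Hd_lieD_linVF, S18.Hd_C_mul]
        have hHdLck : ∀ k, S18.Hd d (Lc^[k] ψ) = Lc^[k] (S18.Hd d ψ) := by
          intro k
          induction k with
          | zero => rfl
          | succ k ihk =>
              rw [Function.iterate_succ_apply', Function.iterate_succ_apply', hHdLc, ihk]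
        have hhom : ∀ k, S18.homog d (Lc^[k] (S18.Hd d ψ)) := by
          intro k
          induction k with
          | zero => exact S18.homog_Hd d ψ
          | succ k ihk =>
              rw [Function.iterate_succ_apply']
              exact S18.homog_sub (S18.homog_lieD_linVF As ihk) (S18.homog_C_mul c ihk)
        have hstep : ∀ k, Lc^[k + 2] (S18.Hd d ψ)
            = MvPowerSeries.C (σ := Fin n) (R := ℂ) (-1)
              * lieD (linVF An) (Lc^[k + 1] (S18.Hd d ψ)) := by
          intro k
          apply MvPowerSeries.ext
          intro m'
          have hcoefC : ∀ ρ : MvPowerSeries (Fin n) ℂ,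
              MvPowerSeries.coeff (R := ℂ) m' (MvPowerSeries.C (σ := Fin n) (R := ℂ) (-1) * ρ)
                = - MvPowerSeries.coeff (R := ℂ) m' ρ := by
            intro ρ
            rw [MvPowerSeries.coeff_C_mul]
            ring
          rcases eq_or_ne (S18.deg m') d with hd' | hd'
          · -- χ := Lc^[k+1] ψ
            have hlowk : S18.lowzero d (Lc^[k + 1] ψ) := by
              have hiter : Lc^[k + 1] ψ = Lc^[k] (Lc ψ) := Function.iterate_succ_apply Lc k ψ
              rw [hiter]
              exact hlzk k
            have hstar := S18.star_lemma A f hlin (hMk (k + 1)) hlowk m' hd'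
            -- identify coefficients through Hd
            have hu : Lc^[k + 1] (S18.Hd d ψ) = S18.Hd d (Lc^[k + 1] ψ) := (hHdLck (k + 1)).symm
            have hcu : MvPowerSeries.coeff (R := ℂ) m' (Lc^[k + 1] (S18.Hd d ψ))
                = MvPowerSeries.coeff (R := ℂ) m' (Lc^[k + 1] ψ) := by
              rw [hu, S18.coeff_Hd, if_pos hd']
            have hcAs : MvPowerSeries.coeff (R := ℂ) m' (lieD (linVF As) (Lc^[k + 1] (S18.Hd d ψ)))
                = MvPowerSeries.coeff (R := ℂ) m' (lieD (linVF As) (Lc^[k + 1] ψ)) := by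
              rw [hu, ← S18.Hd_lieD_linVF, S18.coeff_Hd, if_pos hd']
            have hcAn : MvPowerSeries.coeff (R := ℂ) m' (lieD (linVF An) (Lc^[k + 1] (S18.Hd d ψ)))
                = MvPowerSeries.coeff (R := ℂ) m' (lieD (linVF An) (Lc^[k + 1] ψ)) := by
              rw [hu, ← S18.Hd_lieD_linVF, S18.coeff_Hd, if_pos hd']
            have hLHS : MvPowerSeries.coeff (R := ℂ) m' (Lc^[k + 2] (S18.Hd d ψ))
                = MvPowerSeries.coeff (R := ℂ) m' (lieD (linVF As) (Lc^[k + 1] ψ))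
                  - c * MvPowerSeries.coeff (R := ℂ) m' (Lc^[k + 1] ψ) := by
              rw [show Lc^[k + 2] (S18.Hd d ψ) = Lc (Lc^[k + 1] (S18.Hd d ψ)) from
                Function.iterate_succ_apply' Lc (k + 1) (S18.Hd d ψ)]
              rw [hLcApp, map_sub, MvPowerSeries.coeff_C_mul, hcAs, hcu]
            have hsum := congrArg (MvPowerSeries.coeff (R := ℂ) m') (hlieA (Lc^[k + 1] ψ))
            rw [map_add] at hsum
            rw [hcoefC, hLHS, hcAn]
            rw [htrA] at hstar
            rw [hsum] at hstar
            linear_combination hstar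
          · rw [hcoefC]
            rw [hhom (k + 2) m' hd']
            rw [S18.homog_lieD_linVF An (hhom (k + 1)) m' hd']
            ring
        have hNpow : ∀ k, Lc^[k + 1] (S18.Hd d ψ)
            = MvPowerSeries.C (σ := Fin n) (R := ℂ) ((-1 : ℂ) ^ k)
              * (fun ρ => lieD (linVF An) ρ)^[k] (Lc (S18.Hd d ψ)) := by
          intro k
          induction k with
          | zero => simp
          | succ k ihk =>
              have h1 : Lc^[k + 1 + 1] (S18.Hd d ψ) = Lc^[k + 2] (S18.Hd d ψ) := rfl
              rw [h1, hstep k, ihk, S18.lieD_C_mul]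
              rw [Function.iterate_succ_apply']
              rw [← mul_assoc, ← map_mul]
              congr 2
              ring
        obtain ⟨K, hK⟩ := S18.nilp_kill hnil d
        have hzero : Lc^[K + 1] (S18.Hd d ψ) = 0 := by
          rw [hNpow K, hK (Lc (S18.Hd d ψ)) (hhom 1), mul_zero]
        have hLc1 : Lc (S18.Hd d ψ) = 0 := by
          have := S18.ss_transfer hss c (S18.homog_Hd d ψ) (K + 1) hzero
          rw [hLcApp]
          exact this
        have hHdzero : S18.Hd d (Lc ψ) = 0 := by
          rw [show S18.Hd d (Lc ψ) = Lc^[1] (S18.Hd d ψ) from hHdLck 1]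
          rw [Function.iterate_one]
          exact hLc1
        have := congrArg (MvPowerSeries.coeff (R := ℂ) m) hHdzero
        rw [S18.coeff_Hd, if_pos hm, map_zero] at this
        exact this
    have hchi : Lc ψ = 0 := by
      apply MvPowerSeries.ext
      intro m
      rw [map_zero]
      exact main (S18.deg m) m rfl
    rw [hLcApp ψ] at hchi
    exact sub_eq_zero.mp hchi
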